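/- Let A, B ∈ S^n with A ≠ B. Then {x ∈ ℝ^n : xᵀBx = 0} ⊆ {x ∈ ℝ^n : xᵀAx ≥ 0} holds if and only if {X ∈ S^n_+ : ⟨B,X⟩ = 0} ⊆ {X ∈ S^n_+ : ⟨A,X⟩ ≥ 0}. -/

import Mathlib

open Matrix

section aux6

variable {n : ℕ}

private def qf6 (M : Matrix (Fin n) (Fin n) ℝ) (x : Fin n → ℝ) : ℝ := x ⬝ᵥ M.mulVec x

private lemma qf6_add_smul (M : Matrix (Fin n) (Fin n) ℝ) (x y : Fin n → ℝ) (t : ℝ) :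
    qf6 M (x + t • y) =
      qf6 M x + t * (x ⬝ᵥ M.mulVec y + y ⬝ᵥ M.mulVec x) + t^2 * qf6 M y := by
  simp [qf6, Matrix.mulVec_add, Matrix.mulVec_smul, dotProduct_add, add_dotProduct,
    dotProduct_smul, smul_dotProduct, smul_eq_mul]
  ring

private lemma qf6_smul_sub (M : Matrix (Fin n) (Fin n) ℝ) (x y : Fin n → ℝ) (t : ℝ) :
    qf6 M (t • x - y) =
      t^2 * qf6 M x - t * (x ⬝ᵥ M.mulVec y + y ⬝ᵥ M.mulVec x) + qf6 M y := by
  simp [qf6, Matrix.mulVec_sub, Matrix.mulVec_smul, dotProduct_sub, sub_dotProduct,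
    dotProduct_smul, smul_dotProduct, smul_eq_mul]
  ring

private lemma qf6_smul (M : Matrix (Fin n) (Fin n) ℝ) (c : ℝ) (x : Fin n → ℝ) :
    qf6 M (c • x) = c^2 * qf6 M x := by
  simp [qf6, Matrix.mulVec_smul, dotProduct_smul, smul_dotProduct, smul_eq_mul]
  ring

private lemma root6 (bi bj c : ℝ) (hi : 0 < bi) (hj : bj < 0) :
    ∃ t : ℝ, bi + c * t + bj * t^2 = 0 := by
  have hbj : bj ≠ 0 := ne_of_lt hj
  have harg : 0 ≤ c^2 - 4 * bj * bi := by nlinarith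
  set s := Real.sqrt (c^2 - 4 * bj * bi) with hsdef
  have hs : s^2 = c^2 - 4 * bj * bi := Real.sq_sqrt harg
  refine ⟨(-c - s) / (2 * bj), ?_⟩
  field_simp
  nlinarith [hs]

private lemma list_sum_nonpos : ∀ (l : List ℝ), (∀ x ∈ l, x ≤ 0) → l.sum ≤ 0 := by
  intro l
  induction l with
  | nil => simp
  | cons a t ih =>
    intro h
    simp only [List.sum_cons]
    have := ih (fun x hx => h x (List.mem_cons_of_mem a hx))
    have := h a List.mem_cons_self
    linarith

private lemma list_sum_nonneg : ∀ (l : List ℝ), (∀ x ∈ l, 0 ≤ x) → 0 ≤ l.sum := by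
  intro l
  induction l with
  | nil => simp
  | cons a t ih =>
    intro h
    simp only [List.sum_cons]
    have := ih (fun x hx => h x (List.mem_cons_of_mem a hx))
    have := h a List.mem_cons_self
    linarith

/-- Sturm–Zhang style induction: if the vector condition holds, then any finite family of
vectors whose `B`-quadratic forms sum to zero has nonnegative sum of `A`-quadratic forms. -/
private lemma key6 (A B : Matrix (Fin n) (Fin n) ℝ)
    (hV : ∀ x : Fin n → ℝ, qf6 B x = 0 → 0 ≤ qf6 A x) :
    ∀ (N : ℕ) (l : List (Fin n → ℝ)), l.length ≤ N →
      (l.map (qf6 B)).sum = 0 → 0 ≤ (l.map (qf6 A)).sum := by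
  intro N
  induction N with
  | zero =>
    intro l hl _
    have : l = [] := List.length_eq_zero_iff.mp (Nat.le_zero.mp hl)
    simp [this]
  | succ N ih =>
    intro l hl hsum
    by_cases hnil : l = []
    · simp [hnil]
    by_cases h0 : ∃ x ∈ l, qf6 B x = 0
    · obtain ⟨x, hx, hbx⟩ := h0
      have hperm : l.Perm (x :: l.erase x) := List.perm_cons_erase hx
      have hA : (l.map (qf6 A)).sum = qf6 A x + ((l.erase x).map (qf6 A)).sum := by
        rw [(hperm.map (qf6 A)).sum_eq]; simp
      have hBsum : (l.map (qf6 B)).sum = qf6 B x + ((l.erase x).map (qf6 B)).sum := by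
        rw [(hperm.map (qf6 B)).sum_eq]; simp
      have hB' : ((l.erase x).map (qf6 B)).sum = 0 := by
        rw [hBsum, hbx] at hsum; linarith
      have hlen : (l.erase x).length ≤ N := by
        have := List.length_erase_of_mem hx
        omega
      have h1 := ih (l.erase x) hlen hB'
      have h2 := hV x hbx
      rw [hA]; linarith
    · push_neg at h0
      -- all qf6 B values nonzero; find positive and negative ones
      have hpos : ∃ x ∈ l, 0 < qf6 B x := by
        by_contra hc
        push_neg at hc
        have : (l.map (qf6 B)).sum < 0 := by
          rcases l with _ | ⟨a, t⟩
          · exact absurd rfl hnil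
          · simp only [List.map_cons, List.sum_cons]
            have ha : qf6 B a < 0 :=
              lt_of_le_of_ne (hc a List.mem_cons_self) (h0 a List.mem_cons_self)
            have ht : (t.map (qf6 B)).sum ≤ 0 := by
              apply list_sum_nonpos
              intro v hv
              simp only [List.mem_map] at hv
              obtain ⟨z, hz, rfl⟩ := hv
              exact hc z (List.mem_cons_of_mem a hz)
            linarith
        linarith [hsum ▸ this]
      have hneg : ∃ y ∈ l, qf6 B y < 0 := by
        by_contra hc
        push_neg at hc
        have : 0 < (l.map (qf6 B)).sum := by
          rcases l with _ | ⟨a, t⟩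
          · exact absurd rfl hnil
          · simp only [List.map_cons, List.sum_cons]
            have ha : 0 < qf6 B a :=
              lt_of_le_of_ne (hc a List.mem_cons_self) (Ne.symm (h0 a List.mem_cons_self))
            have ht : 0 ≤ (t.map (qf6 B)).sum := by
              apply list_sum_nonneg
              intro v hv
              simp only [List.mem_map] at hv
              obtain ⟨z, hz, rfl⟩ := hv
              exact hc z (List.mem_cons_of_mem a hz)
            linarith
        linarith [hsum ▸ this]
      obtain ⟨x, hx, hbx⟩ := hpos
      obtain ⟨y, hy, hby⟩ := hneg
      have hxy : x ≠ y := by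
        intro h; rw [h] at hbx; linarith
      have hy' : y ∈ l.erase x := (List.mem_erase_of_ne (Ne.symm hxy)).mpr hy
      -- the cross term
      set c : ℝ := x ⬝ᵥ B.mulVec y + y ⬝ᵥ B.mulVec x with hc
      obtain ⟨t, ht⟩ := root6 (qf6 B x) (qf6 B y) c hbx hby
      set w : Fin n → ℝ := x + t • y with hw
      have hBw : qf6 B w = 0 := by
        rw [hw, qf6_add_smul]; rw [← hc]; linarith
      have hAw : 0 ≤ qf6 A w := hV w hBw
      have honet : (0:ℝ) < 1 + t^2 := by positivity
      set u : Fin n → ℝ := (Real.sqrt (1 + t^2))⁻¹ • (t • x - y) with hu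
      have hsq : ((Real.sqrt (1 + t^2))⁻¹)^2 = (1 + t^2)⁻¹ := by
        rw [← Real.sqrt_inv]
        exact Real.sq_sqrt (by positivity)
      have hqu : ∀ M : Matrix (Fin n) (Fin n) ℝ,
          qf6 M u = (1 + t^2)⁻¹ * qf6 M (t • x - y) := by
        intro M; rw [hu, qf6_smul, hsq]
      have hsum_id : ∀ M : Matrix (Fin n) (Fin n) ℝ,
          qf6 M (x + t • y) + qf6 M (t • x - y) = (1 + t^2) * (qf6 M x + qf6 M y) := by
        intro M; rw [qf6_add_smul, qf6_smul_sub]; ring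
      have hBu : qf6 B u = qf6 B x + qf6 B y := by
        rw [hqu B]
        have := hsum_id B
        rw [← hw] at this
        rw [hBw] at this
        field_simp
        linarith
      have hAu : qf6 A u = qf6 A x + qf6 A y - (1 + t^2)⁻¹ * qf6 A w := by
        rw [hqu A]
        have := hsum_id A
        rw [← hw] at this
        have h2 : qf6 A (t • x - y) = (1 + t^2) * (qf6 A x + qf6 A y) - qf6 A w := by linarith
        rw [h2]
        field_simp
      have hAu_le : qf6 A u ≤ qf6 A x + qf6 A y := by
        rw [hAu]
        have : 0 ≤ (1 + t^2)⁻¹ * qf6 A w := by positivity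
        linarith
      -- the new list
      set l2 : List (Fin n → ℝ) := (l.erase x).erase y with hl2
      have hperm : l.Perm (x :: y :: l2) :=
        (List.perm_cons_erase hx).trans ((List.perm_cons_erase hy').cons x)
      have hsA : (l.map (qf6 A)).sum = qf6 A x + qf6 A y + (l2.map (qf6 A)).sum := by
        rw [(hperm.map (qf6 A)).sum_eq]; simp; ring
      have hsB : (l.map (qf6 B)).sum = qf6 B x + qf6 B y + (l2.map (qf6 B)).sum := by
        rw [(hperm.map (qf6 B)).sum_eq]; simp; ring
      have hlen2 : (u :: l2).length ≤ N := by
        have h1 := List.length_erase_of_mem hx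
        have h2 : l2.length = (l.erase x).length - 1 := by
          rw [hl2]; exact List.length_erase_of_mem hy'
        have h3 : 1 ≤ l.length := by
          rcases l with _ | _
          · exact absurd rfl hnil
          · simp
        have h4 : 2 ≤ l.length := by
          have := hperm.length_eq
          simp at this
          omega
        simp only [List.length_cons]
        omega
      have hnewB : ((u :: l2).map (qf6 B)).sum = 0 := by
        simp only [List.map_cons, List.sum_cons]
        rw [hBu]
        rw [hsB] at hsum
        linarith
      have := ih (u :: l2) hlen2 hnewB
      simp only [List.map_cons, List.sum_cons] at this
      rw [hsA]
      linarith




private lemma tri6 {α : Type*} [AddCommMonoid α] {m : ℕ} (f : Fin m → Fin m → Fin m → α) :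
    ∑ a, ∑ b, ∑ c, f a b c = ∑ c, ∑ a, ∑ b, f a b c := by
  conv_lhs => enter [2, a]; rw [Finset.sum_comm]
  rw [Finset.sum_comm]

private lemma trace_eq_sum6 (M S : Matrix (Fin n) (Fin n) ℝ) (hS : Sᵀ = S) :
    (M * (S * S)).trace = ∑ j, qf6 M (fun i => S i j) := by
  have hs : ∀ i j, S i j = S j i := fun i j =>
    ((congrFun (congrFun hS i) j).symm).trans (Matrix.transpose_apply S i j)
  simp only [qf6, Matrix.trace, Matrix.diag, Matrix.mul_apply, dotProduct, Matrix.mulVec,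
    Finset.sum_mul, Finset.mul_sum]
  rw [tri6]
  refine Finset.sum_congr rfl fun c _ => Finset.sum_congr rfl fun a _ =>
    Finset.sum_congr rfl fun b _ => ?_
  rw [hs c a]
  ring

private lemma psd_outer6 (x : Fin n → ℝ) : (vecMulVec x x).PosSemidef := by
  simpa using Matrix.posSemidef_vecMulVec_self_star x

private lemma trace_outer6 (M : Matrix (Fin n) (Fin n) ℝ) (x : Fin n → ℝ) :
    (M * vecMulVec x x).trace = qf6 M x := by
  simp only [qf6, Matrix.trace, Matrix.diag, Matrix.mul_apply, Matrix.vecMulVec_apply,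
    dotProduct, Matrix.mulVec, Finset.mul_sum]
  refine Finset.sum_congr rfl fun i _ => Finset.sum_congr rfl fun j _ => by ring

end aux6

theorem stmt6 {n : ℕ} (A B : Matrix (Fin n) (Fin n) ℝ)
    (hA : A.IsSymm) (hB : B.IsSymm) (hAB : A ≠ B) :
    ({x : Fin n → ℝ | x ⬝ᵥ B.mulVec x = 0} ⊆ {x : Fin n → ℝ | 0 ≤ x ⬝ᵥ A.mulVec x})
      ↔ ({X : Matrix (Fin n) (Fin n) ℝ | X.PosSemidef ∧ (B * X).trace = 0}
          ⊆ {X : Matrix (Fin n) (Fin n) ℝ | X.PosSemidef ∧ 0 ≤ (A * X).trace}) := by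
  constructor
  · intro hV X hXmem
    obtain ⟨hX, hBX⟩ := hXmem
    refine ⟨hX, ?_⟩
    set S := (open scoped MatrixOrder in CFC.sqrt X) with hSdef
    have hmul : S * S = X := by open scoped MatrixOrder in exact CFC.sqrt_mul_sqrt_self X hX.nonneg
    have hsym : Sᵀ = S := by
      have h := (open scoped MatrixOrder in (CFC.sqrt_nonneg X).posSemidef).1
      ext i j
      have := congrFun (congrFun h i) j
      simpa [Matrix.conjTranspose_apply] using this
    have hV' : ∀ x : Fin n → ℝ, qf6 B x = 0 → 0 ≤ qf6 A x := fun x hx => hV hx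
    set vs : List (Fin n → ℝ) := (List.finRange n).map (fun j => fun i => S i j) with hvs
    have hlen : vs.length ≤ n := by simp [hvs]
    have hsumB : (vs.map (qf6 B)).sum = (B * X).trace := by
      rw [hvs, List.map_map, ← hmul, trace_eq_sum6 B S hsym, Fin.sum_univ_def]
      rfl
    have hsumA : (vs.map (qf6 A)).sum = (A * X).trace := by
      rw [hvs, List.map_map, ← hmul, trace_eq_sum6 A S hsym, Fin.sum_univ_def]
      rfl
    have := key6 A B hV' n vs hlen (by rw [hsumB]; exact hBX)
    rwa [hsumA] at this
  · intro hM x hx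
    have h1 : (vecMulVec x x).PosSemidef := psd_outer6 x
    have h2 : (B * vecMulVec x x).trace = 0 := by rw [trace_outer6]; exact hx
    obtain ⟨-, h3⟩ := hM ⟨h1, h2⟩
    rw [trace_outer6 A x] at h3
    exact h3
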